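/- Let P_{XY} be a joint probability mass function on a finite set 𝒳 × 𝒴, let y ∈ 𝒴 satisfy P_Y(y) > 0, assume P_{X|Y}(x|y) > 0 for every x ∈ 𝒳 with P_X(x) > 0, and let h : ℕ → (0, ∞) be a non-decreasing function with h(n) → ∞ as n → ∞. Then the supremum, over all finite sets 𝒰 and all channels P_{U|X}, of the ratio [min over guessing functions G of ∑_{u ∈ 𝒰} h(G(u)) P_U(u)] / [min over guessing functions G of ∑_{u ∈ 𝒰} h(G(u)) P_{U|Y}(u|y)] equals max_{x : P_X(x) > 0} P_X(x) / P_{X|Y}(x|y), i.e., the pointwise maximal h(G)-guesswork leakage equals exp(D_∞(P_X ‖ P_{X|Y=y})). -/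
import Mathlib


open Finset

/-- The `h`-guesswork of a pmf `P` on a finite set `U`: the minimum over all
guessing functions (bijections `G : U → {1,…,n}`) of `∑ u, h(G(u)) · P(u)`. -/
noncomputable def hGuesswork {U : Type*} [Fintype U] (h : ℕ → ℝ) (P : U → ℝ) : ℝ :=
  ⨅ G : U ≃ Fin (Fintype.card U), ∑ u, h ((G u).val + 1) * P u

namespace PMGLaux

variable {U : Type*} [Fintype U] {h : ℕ → ℝ}

lemma hG_le (P : U → ℝ) (G : U ≃ Fin (Fintype.card U)) :
    hGuesswork h P ≤ ∑ u, h ((G u).val + 1) * P u :=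
  ciInf_le (Set.Finite.bddBelow (Set.finite_range _)) G

lemma le_hG {P : U → ℝ} {c : ℝ}
    (hc : ∀ G : U ≃ Fin (Fintype.card U), c ≤ ∑ u, h ((G u).val + 1) * P u) :
    c ≤ hGuesswork h P := by
  have : Nonempty (U ≃ Fin (Fintype.card U)) := ⟨Fintype.equivFin U⟩
  exact le_ciInf hc

lemma exists_min_hG (P : U → ℝ) :
    ∃ G : U ≃ Fin (Fintype.card U),
      hGuesswork h P = ∑ u, h ((G u).val + 1) * P u := by
  have : Nonempty (U ≃ Fin (Fintype.card U)) := ⟨Fintype.equivFin U⟩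
  obtain ⟨G₀, hG₀⟩ := Finite.exists_min
    (fun G : U ≃ Fin (Fintype.card U) => ∑ u, h ((G u).val + 1) * P u)
  exact ⟨G₀, le_antisymm (hG_le P G₀) (le_hG hG₀)⟩

lemma hG_ge_h1 (hpos : ∀ n, 0 < h n) (hmono : Monotone h)
    (P : U → ℝ) (hP0 : ∀ u, 0 ≤ P u) (hP1 : ∑ u, P u = 1) :
    h 1 ≤ hGuesswork h P := by
  apply le_hG
  intro G
  calc h 1 = h 1 * ∑ u, P u := by rw [hP1, mul_one]
    _ = ∑ u, h 1 * P u := by rw [Finset.mul_sum]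
    _ ≤ ∑ u, h ((G u).val + 1) * P u :=
      Finset.sum_le_sum fun u _ => mul_le_mul_of_nonneg_right (hmono (by omega)) (hP0 u)

lemma sum_channel {X : Type*} [Fintype X] (n : ℕ) (K : X → Fin n → ℝ) (R : X → ℝ)
    (hK1 : ∀ x, ∑ u, K x u = 1) (hR : ∑ x, R x = 1) :
    ∑ u, ∑ x, K x u * R x = 1 := by
  rw [Finset.sum_comm]
  calc ∑ x, ∑ u, K x u * R x = ∑ x, (∑ u, K x u) * R x := by
        simp [Finset.sum_mul]
    _ = 1 := by simp only [hK1, one_mul]; exact hR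

noncomputable def Asum (h : ℕ → ℝ) (m : ℕ) : ℝ := ∑ i ∈ Finset.range (m + 1), h (i + 1)

noncomputable def cm (h : ℕ → ℝ) (m : ℕ) : ℝ := Asum h m / ((m + 1 : ℕ) : ℝ)

lemma avg_tendsto (h : ℕ → ℝ) (hpos : ∀ n, 0 < h n) (hmono : Monotone h)
    (htop : Filter.Tendsto h Filter.atTop Filter.atTop) :
    Filter.Tendsto (fun m : ℕ => (∑ i ∈ Finset.range m, h (i + 1)) / (m : ℝ))
      Filter.atTop Filter.atTop := by
  have h2 : Filter.Tendsto (fun m : ℕ => m / 2 + 1) Filter.atTop Filter.atTop := by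
    apply Filter.tendsto_atTop_atTop.2
    intro b
    exact ⟨2 * b, fun a ha => by omega⟩
  have h3 : Filter.Tendsto (fun m : ℕ => h (m / 2 + 1) / 2) Filter.atTop Filter.atTop :=
    (htop.comp h2).atTop_div_const two_pos
  apply Filter.tendsto_atTop_mono' _ _ h3
  filter_upwards [Filter.eventually_ge_atTop 1] with m hm
  have hmpos : (0 : ℝ) < m := by exact_mod_cast hm
  rw [div_le_div_iff₀ two_pos hmpos]
  have hsub : Finset.Ico (m / 2) m ⊆ Finset.range m := by
    intro i hi
    simp only [Finset.mem_Ico] at hi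
    simpa using hi.2
  have hlow : (↑(m - m / 2) : ℝ) * h (m / 2 + 1) ≤ ∑ i ∈ Finset.range m, h (i + 1) := by
    have h4 : (Finset.Ico (m / 2) m).card • h (m / 2 + 1) ≤ ∑ i ∈ Finset.Ico (m / 2) m, h (i + 1) :=
      Finset.card_nsmul_le_sum _ _ _ (fun i hi => by
        have : m / 2 ≤ i := (Finset.mem_Ico.mp hi).1
        exact hmono (by omega))
    rw [Nat.card_Ico, nsmul_eq_mul] at h4
    exact h4.trans (Finset.sum_le_sum_of_subset_of_nonneg hsub fun i _ _ => (hpos _).le)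
  have hcard : (m : ℝ) ≤ 2 * (↑(m - m / 2) : ℝ) := by
    have : m ≤ 2 * (m - m / 2) := by omega
    exact_mod_cast this
  nlinarith [hpos (m / 2 + 1), (hpos (m / 2 + 1)).le]

theorem aux_main {X : Type*} [Fintype X] (P Q : X → ℝ)
    (hP0 : ∀ x, 0 ≤ P x) (hQ0 : ∀ x, 0 ≤ Q x)
    (hPsum : ∑ x, P x = 1) (hQsum : ∑ x, Q x = 1)
    (habs : ∀ x, 0 < P x → 0 < Q x)
    (h : ℕ → ℝ) (hpos : ∀ n, 0 < h n) (hmono : Monotone h)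
    (htop : Filter.Tendsto h Filter.atTop Filter.atTop) :
    sSup {r : ℝ | ∃ (n : ℕ) (K : X → Fin n → ℝ),
        (∀ x u, 0 ≤ K x u) ∧ (∀ x, ∑ u, K x u = 1) ∧
        r = hGuesswork h (fun u => ∑ x, K x u * P x) /
            hGuesswork h (fun u => ∑ x, K x u * Q x)} =
      ⨆ x : {x : X // 0 < P x}, P x.1 / Q x.1 := by
  classical
  have hex : ∃ x, 0 < P x := by
    by_contra hc
    push_neg at hc
    have h0 : ∑ x, P x = 0 := Finset.sum_eq_zero fun x _ => le_antisymm (hc x) (hP0 x)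
    rw [hPsum] at h0
    norm_num at h0
  haveI : Nonempty {x : X // 0 < P x} := ⟨⟨hex.choose, hex.choose_spec⟩⟩
  obtain ⟨xs, hxs⟩ := Finite.exists_max (fun x : {x : X // 0 < P x} => P x.1 / Q x.1)
  set M : ℝ := ⨆ x : {x : X // 0 < P x}, P x.1 / Q x.1 with hMdef
  have hM : M = P xs.1 / Q xs.1 := by
    rw [hMdef]
    exact le_antisymm (ciSup_le hxs)
      (le_ciSup (Set.Finite.bddAbove (Set.finite_range
        (fun x : {x : X // 0 < P x} => P x.1 / Q x.1))) xs)
  have hPs : 0 < P xs.1 := xs.2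
  have hQs : 0 < Q xs.1 := habs _ hPs
  have hMpos : 0 < M := hM ▸ div_pos hPs hQs
  have hPM : ∀ x, P x ≤ M * Q x := by
    intro x
    by_cases hx : 0 < P x
    · have h1 : P x / Q x ≤ M := hM ▸ hxs ⟨x, hx⟩
      exact (div_le_iff₀ (habs x hx)).mp h1
    · have hx0 : P x = 0 := le_antisymm (not_lt.mp hx) (hP0 x)
      rw [hx0]
      exact mul_nonneg hMpos.le (hQ0 x)
  -- upper bound
  have hub : ∀ r ∈ {r : ℝ | ∃ (n : ℕ) (K : X → Fin n → ℝ),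
      (∀ x u, 0 ≤ K x u) ∧ (∀ x, ∑ u, K x u = 1) ∧
      r = hGuesswork h (fun u => ∑ x, K x u * P x) /
          hGuesswork h (fun u => ∑ x, K x u * Q x)}, r ≤ M := by
    rintro r ⟨n, K, hK0, hK1, rfl⟩
    have hQU0 : ∀ u : Fin n, 0 ≤ ∑ x, K x u * Q x :=
      fun u => Finset.sum_nonneg fun x _ => mul_nonneg (hK0 x u) (hQ0 x)
    have hden_pos : 0 < hGuesswork h (fun u => ∑ x, K x u * Q x) :=
      lt_of_lt_of_le (hpos 1)
        (hG_ge_h1 hpos hmono _ hQU0 (sum_channel n K Q hK1 hQsum))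
    obtain ⟨G₀, hG₀⟩ := exists_min_hG (h := h) (fun u : Fin n => ∑ x, K x u * Q x)
    rw [div_le_iff₀ hden_pos]
    calc hGuesswork h (fun u => ∑ x, K x u * P x)
        ≤ ∑ u, h ((G₀ u).val + 1) * ∑ x, K x u * P x := hG_le _ G₀
      _ ≤ ∑ u, h ((G₀ u).val + 1) * (M * ∑ x, K x u * Q x) := by
          refine Finset.sum_le_sum fun u _ => mul_le_mul_of_nonneg_left ?_ (hpos _).le
          rw [Finset.mul_sum]
          refine Finset.sum_le_sum fun x _ => ?_
          rw [mul_left_comm]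
          exact mul_le_mul_of_nonneg_left (hPM x) (hK0 x u)
      _ = M * ∑ u, h ((G₀ u).val + 1) * ∑ x, K x u * Q x := by
          rw [Finset.mul_sum]
          exact Finset.sum_congr rfl fun u _ => by ring
      _ = M * hGuesswork h (fun u => ∑ x, K x u * Q x) := by rw [hG₀]
  have hPle1 : P xs.1 ≤ 1 := hPsum ▸ Finset.single_le_sum (fun x _ => hP0 x) (Finset.mem_univ _)
  have hQle1 : Q xs.1 ≤ 1 := hQsum ▸ Finset.single_le_sum (fun x _ => hQ0 x) (Finset.mem_univ _)
  have hApos : ∀ m, 0 < Asum h m :=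
    fun m => Finset.sum_pos (fun i _ => hpos _) ⟨0, Finset.mem_range.2 (Nat.succ_pos m)⟩
  have hcpos : ∀ m, 0 < cm h m := fun m => div_pos (hApos m) (by positivity)
  have hβpos : ∀ m : ℕ, 0 < (1 - Q xs.1) * h 1 + Q xs.1 * cm h m := fun m =>
    add_pos_of_nonneg_of_pos (mul_nonneg (by linarith) (hpos 1).le)
      (mul_pos hQs (hcpos m))
  have hPQs : P xs.1 = M * Q xs.1 := by rw [hM]; field_simp
  -- construction
  have hmem : ∀ m : ℕ, ∃ r ∈ {r : ℝ | ∃ (n : ℕ) (K : X → Fin n → ℝ),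
      (∀ x u, 0 ≤ K x u) ∧ (∀ x, ∑ u, K x u = 1) ∧
      r = hGuesswork h (fun u => ∑ x, K x u * P x) /
          hGuesswork h (fun u => ∑ x, K x u * Q x)},
      M - (M - 1) * h 1 / ((1 - Q xs.1) * h 1 + Q xs.1 * cm h m) ≤ r := by
    intro m
    set Km : X → Fin (m + 1) → ℝ :=
      fun x u => if x = xs.1 then ((m + 1 : ℕ) : ℝ)⁻¹ else if u = 0 then 1 else 0 with hKmdef
    have hm1 : ((m + 1 : ℕ) : ℝ) ≠ 0 := by positivity
    have hKm0 : ∀ x u, 0 ≤ Km x u := by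
      intro x u
      simp only [hKmdef]
      split_ifs <;> positivity
    have hKm1 : ∀ x, ∑ u, Km x u = 1 := by
      intro x
      by_cases hx : x = xs.1
      · simp only [hKmdef, hx, if_pos rfl]
        rw [Finset.sum_const, Finset.card_univ, Fintype.card_fin, nsmul_eq_mul]
        field_simp
      · simp [hKmdef, hx]
    have hrow : ∀ (R : X → ℝ), ∑ x, R x = 1 → ∀ u : Fin (m + 1),
        (∑ x, Km x u * R x)
          = ((m + 1 : ℕ) : ℝ)⁻¹ * R xs.1 + (if u = 0 then 1 - R xs.1 else 0) := by
      intro R hR u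
      rw [← Finset.add_sum_erase _ _ (Finset.mem_univ xs.1)]
      have h1' : Km xs.1 u * R xs.1 = ((m + 1 : ℕ) : ℝ)⁻¹ * R xs.1 := by
        simp [hKmdef]
      have h2' : ∑ x ∈ Finset.univ.erase xs.1, Km x u * R x
          = (if u = 0 then 1 - R xs.1 else 0) := by
        have hc : ∀ x ∈ Finset.univ.erase xs.1, Km x u * R x
            = (if u = 0 then R x else 0) := by
          intro x hx
          have hne : x ≠ xs.1 := (Finset.mem_erase.mp hx).1
          simp only [hKmdef, if_neg hne]
          split_ifs <;> ring
        rw [Finset.sum_congr rfl hc]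
        split_ifs with hu
        · simp only [Finset.sum_erase_eq_sub (Finset.mem_univ xs.1), hR]
        · simp
      rw [h1', h2']
    have hAsumG : ∀ G : Fin (m + 1) ≃ Fin (Fintype.card (Fin (m + 1))),
        ∑ u : Fin (m + 1), h ((G u).val + 1) = Asum h m := by
      intro G
      rw [Equiv.sum_comp G (fun j : Fin (Fintype.card (Fin (m + 1))) => h (j.val + 1)),
        Fin.sum_univ_eq_sum_range (fun i => h (i + 1)) (Fintype.card (Fin (m + 1))),
        Fintype.card_fin]
      rfl
    -- numerator lower bound
    have hnum_ge : (1 - P xs.1) * h 1 + P xs.1 * cm h m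
        ≤ hGuesswork h (fun u => ∑ x, Km x u * P x) := by
      apply le_hG
      intro G
      have heq : (∑ u, h ((G u).val + 1) * ∑ x, Km x u * P x)
          = ((m + 1 : ℕ) : ℝ)⁻¹ * P xs.1 * Asum h m + h ((G 0).val + 1) * (1 - P xs.1) := by
        simp only [hrow P hPsum]
        simp only [mul_add, mul_ite, mul_zero, Finset.sum_add_distrib,
          Finset.sum_ite_eq', Finset.mem_univ, if_true]
        rw [← Finset.sum_mul, hAsumG G]
        ring
      rw [heq]
      have hh : h 1 ≤ h ((G 0).val + 1) := hmono (by omega)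
      have hnn : (0 : ℝ) ≤ 1 - P xs.1 := by linarith
      have hceq : ((m + 1 : ℕ) : ℝ)⁻¹ * P xs.1 * Asum h m = P xs.1 * cm h m := by
        simp only [cm]
        field_simp
      rw [hceq]
      nlinarith [mul_le_mul_of_nonneg_right hh hnn]
    -- denominator upper bound
    have hden_le : hGuesswork h (fun u => ∑ x, Km x u * Q x)
        ≤ (1 - Q xs.1) * h 1 + Q xs.1 * cm h m := by
      refine le_trans (hG_le (h := h) (fun u => ∑ x, Km x u * Q x)
        (finCongr (Fintype.card_fin (m + 1)).symm)) (le_of_eq ?_)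
      simp only [hrow Q hQsum, finCongr_apply, Fin.coe_cast]
      simp only [mul_add, mul_ite, mul_zero, Finset.sum_add_distrib,
        Finset.sum_ite_eq', Finset.mem_univ, if_true]
      rw [← Finset.sum_mul, Fin.sum_univ_eq_sum_range (fun i => h (i + 1)) (m + 1)]
      show Asum h m * _ + h ((0 : Fin (m + 1)).val + 1) * _ = _
      have h0v : ((0 : Fin (m + 1)).val : ℕ) = 0 := rfl
      rw [h0v]
      simp only [cm]
      field_simp
      ring
    -- denominator positivity
    have hden_pos : 0 < hGuesswork h (fun u => ∑ x, Km x u * Q x) := by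
      refine lt_of_lt_of_le (hpos 1) (hG_ge_h1 hpos hmono _ ?_ ?_)
      · exact fun u => Finset.sum_nonneg fun x _ => mul_nonneg (hKm0 x u) (hQ0 x)
      · exact sum_channel (m + 1) Km Q hKm1 hQsum
    refine ⟨hGuesswork h (fun u => ∑ x, Km x u * P x) /
        hGuesswork h (fun u => ∑ x, Km x u * Q x),
      ⟨m + 1, Km, hKm0, hKm1, rfl⟩, ?_⟩
    have hα0 : 0 ≤ (1 - P xs.1) * h 1 + P xs.1 * cm h m :=
      add_nonneg (mul_nonneg (by linarith) (hpos 1).le) (mul_nonneg hPs.le (hcpos m).le)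
    have hratio : ((1 - P xs.1) * h 1 + P xs.1 * cm h m) /
        ((1 - Q xs.1) * h 1 + Q xs.1 * cm h m)
        ≤ hGuesswork h (fun u => ∑ x, Km x u * P x) /
          hGuesswork h (fun u => ∑ x, Km x u * Q x) :=
      div_le_div₀ (hα0.trans hnum_ge) hnum_ge hden_pos hden_le
    refine le_trans (le_of_eq ?_) hratio
    have hβne : ((1 - Q xs.1) * h 1 + Q xs.1 * cm h m) ≠ 0 := (hβpos m).ne'
    have hkey : (1 - P xs.1) * h 1 + P xs.1 * cm h m
        = M * ((1 - Q xs.1) * h 1 + Q xs.1 * cm h m) - (M - 1) * h 1 := by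
      linear_combination (cm h m - h 1) * hPQs
    rw [hkey, sub_div, mul_div_cancel_right₀ _ hβne]
  -- finish
  have hbdd : BddAbove {r : ℝ | ∃ (n : ℕ) (K : X → Fin n → ℝ),
      (∀ x u, 0 ≤ K x u) ∧ (∀ x, ∑ u, K x u = 1) ∧
      r = hGuesswork h (fun u => ∑ x, K x u * P x) /
          hGuesswork h (fun u => ∑ x, K x u * Q x)} := ⟨M, hub⟩
  have hne : Set.Nonempty {r : ℝ | ∃ (n : ℕ) (K : X → Fin n → ℝ),
      (∀ x u, 0 ≤ K x u) ∧ (∀ x, ∑ u, K x u = 1) ∧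
      r = hGuesswork h (fun u => ∑ x, K x u * P x) /
          hGuesswork h (fun u => ∑ x, K x u * Q x)} := by
    obtain ⟨r, hr, -⟩ := hmem 0
    exact ⟨r, hr⟩
  refine le_antisymm (csSup_le hne hub) ?_
  have hc_top : Filter.Tendsto (fun m : ℕ => cm h m) Filter.atTop Filter.atTop := by
    have h2 := (avg_tendsto h hpos hmono htop).comp (Filter.tendsto_add_atTop_nat 1)
    simpa only [Function.comp_def, cm, Asum, Nat.cast_add, Nat.cast_one] using h2
  have hβtop : Filter.Tendsto (fun m : ℕ => (1 - Q xs.1) * h 1 + Q xs.1 * cm h m)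
      Filter.atTop Filter.atTop := by
    refine Filter.tendsto_atTop_mono (fun m => ?_) (hc_top.const_mul_atTop hQs)
    have : 0 ≤ (1 - Q xs.1) * h 1 := mul_nonneg (by linarith) (hpos 1).le
    linarith
  have hlim : Filter.Tendsto
      (fun m : ℕ => M - (M - 1) * h 1 / ((1 - Q xs.1) * h 1 + Q xs.1 * cm h m))
      Filter.atTop (nhds M) := by
    have h0 : Filter.Tendsto
        (fun m : ℕ => (M - 1) * h 1 / ((1 - Q xs.1) * h 1 + Q xs.1 * cm h m))
        Filter.atTop (nhds 0) := Filter.Tendsto.div_atTop tendsto_const_nhds hβtop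
    simpa using (tendsto_const_nhds (x := M)).sub h0
  refine le_of_tendsto' hlim fun m => ?_
  obtain ⟨r, hrS, hr⟩ := hmem m
  exact hr.trans (le_csSup hbdd hrS)



end PMGLaux

/-- **Pointwise maximal `h(G)`-guesswork leakage.**
Let `P_{XY}` be a joint pmf on a finite set `𝒳 × 𝒴`, let `y` satisfy `P_Y(y) > 0`,
assume `P_{X|Y}(x|y) > 0` whenever `P_X(x) > 0`, and let `h : ℕ → (0,∞)` be
non-decreasing with `h(n) → ∞`.  Then the supremum, over all finite sets `𝒰`
(wlog `Fin n`) and channels `P_{U|X}`, of the ratio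
`[min_G ∑ h(G(u)) P_U(u)] / [min_G ∑ h(G(u)) P_{U|Y}(u|y)]` equals
`max_{x : P_X(x)>0} P_X(x)/P_{X|Y}(x|y) = exp (D_∞(P_X ‖ P_{X|Y=y}))`. -/
theorem pointwise_maximal_hG_guesswork_leakage
    {X Y : Type*} [Fintype X] [Fintype Y]
    (PXY : X → Y → ℝ)
    (hnn : ∀ x y, 0 ≤ PXY x y)
    (hsum : ∑ x, ∑ y, PXY x y = 1)
    (y : Y)
    (hy : 0 < ∑ x, PXY x y)
    (habs : ∀ x, 0 < ∑ y', PXY x y' → 0 < PXY x y / ∑ x', PXY x' y)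
    (h : ℕ → ℝ)
    (hpos : ∀ n, 0 < h n)
    (hmono : Monotone h)
    (htop : Filter.Tendsto h Filter.atTop Filter.atTop) :
    sSup {r : ℝ | ∃ (n : ℕ) (K : X → Fin n → ℝ),
        (∀ x u, 0 ≤ K x u) ∧ (∀ x, ∑ u, K x u = 1) ∧
        r = hGuesswork h (fun u => ∑ x, K x u * (∑ y', PXY x y')) /
            hGuesswork h (fun u => ∑ x, K x u * (PXY x y / ∑ x', PXY x' y))} =
      ⨆ x : {x : X // 0 < ∑ y', PXY x y'},
        (∑ y', PXY x.1 y') / (PXY x.1 y / ∑ x', PXY x' y) := by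
  exact PMGLaux.aux_main (fun x => ∑ y', PXY x y') (fun x => PXY x y / ∑ x', PXY x' y)
    (fun x => Finset.sum_nonneg fun _ _ => hnn _ _)
    (fun x => div_nonneg (hnn x y) hy.le)
    hsum
    (by rw [← Finset.sum_div]; exact div_self hy.ne')
    habs h hpos hmono htop
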